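/- Miracle identity for Nikishin systems: for measures σ₁,…,σⱼ (j ≥ 2) supported on intervals with Δᵢ ∩ Δᵢ₊₁ = ∅, and z ∉ Δ₁ ∪ Δⱼ, one has ŝ_{1,j}(z) − ŝ_{1,j−1}(z)ŝ_{j,j}(z) + ŝ_{1,j−2}(z)ŝ_{j,j−1}(z) − … + (−1)^{j−1} ŝ_{1,1}(z)ŝ_{j,2}(z) + (−1)^j ŝ_{j,1}(z) = 0, where s_{1,k} = ⟨σ₁,…,σₖ⟩ and s_{j,k} = ⟨σⱼ,σ_{j−1},…,σₖ⟩. -/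

import Mathlib

open MeasureTheory

/-- Topological support of a measure on ℝ. -/
def msupport (σ : Measure ℝ) : Set ℝ := {x : ℝ | ∀ U ∈ nhds x, σ U ≠ 0}

/-- Iterated Cauchy transform of a chain of measures:
`chainT σ [i₁,…,iₚ]` is the Cauchy transform of `⟨σ_{i₁},…,σ_{iₚ}⟩`. -/
noncomputable def chainT (σ : ℕ → Measure ℝ) : List ℕ → ℂ → ℂ
  | [] => fun _ => 1
  | [i] => fun z => ∫ x, (z - (x : ℂ))⁻¹ ∂(σ i)
  | i :: j :: l => fun z => ∫ x, chainT σ (j :: l) x / (z - x) ∂(σ i)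

/-- `ŝ_{j,k} = ⟨σⱼ,σ_{j+1},…,σₖ⟩^` (increasing chain, `j ≤ k`). -/
noncomputable def shatU (σ : ℕ → Measure ℝ) (j k : ℕ) : ℂ → ℂ :=
  chainT σ (List.range' j (k + 1 - j))

/-- `ŝ_{j,k} = ⟨σⱼ,σ_{j-1},…,σₖ⟩^` (decreasing chain, `j ≥ k`). -/
noncomputable def shatD (σ : ℕ → Measure ℝ) (j k : ℕ) : ℂ → ℂ :=
  chainT σ (List.range' k (j + 1 - k)).reverse

section Helpers

open Set Metric Complex

/-- Weighted iterated Cauchy transform. -/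
noncomputable def cW (σ : ℕ → Measure ℝ) (f : ℂ → ℂ) : List ℕ → ℂ → ℂ
  | [] => f
  | i :: l => fun z => ∫ x : ℝ, cW σ f l x / (z - x) ∂(σ i)

lemma cW_nil (σ : ℕ → Measure ℝ) (f : ℂ → ℂ) : cW σ f [] = f := rfl

lemma cW_cons (σ : ℕ → Measure ℝ) (f : ℂ → ℂ) (i : ℕ) (l : List ℕ) (z : ℂ) :
    cW σ f (i :: l) z = ∫ x : ℝ, cW σ f l x / (z - x) ∂(σ i) := rfl

lemma chainT_eq_cW (σ : ℕ → Measure ℝ) : ∀ l : List ℕ, chainT σ l = cW σ (fun _ => 1) l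
  | [] => rfl
  | [i] => by
      funext z
      simp [chainT, cW, one_div]
  | i :: j :: l => by
      funext z
      rw [chainT, cW_cons, chainT_eq_cW σ (j :: l)]

lemma cW_append_singleton (σ : ℕ → Measure ℝ) (f : ℂ → ℂ) (i : ℕ) :
    ∀ (L : List ℕ) (z : ℂ),
      cW σ f (L ++ [i]) z = cW σ (fun u => ∫ x : ℝ, f x / (u - x) ∂(σ i)) L z
  | [], z => rfl
  | a :: L, z => by
      rw [List.cons_append, cW_cons, cW_cons]
      refine integral_congr_ae (Filter.Eventually.of_forall fun x => ?_)
      dsimp only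
      rw [cW_append_singleton σ f i L]

/-- The image of a real set in `ℂ`. -/
def cIm (K : Set ℝ) : Set ℂ := Complex.ofReal '' K

lemma mem_cIm_iff {K : Set ℝ} {x : ℝ} : (x : ℂ) ∈ cIm K ↔ x ∈ K := by
  constructor
  · rintro ⟨y, hy, hxy⟩
    rwa [Complex.ofReal_injective hxy] at hy
  · exact fun h => ⟨x, h, rfl⟩

lemma isCompact_cIm {K : Set ℝ} (hK : IsCompact K) : IsCompact (cIm K) :=
  hK.image Complex.continuous_ofReal

lemma exists_gap {K : Set ℝ} (hK : IsCompact K) (hne : K.Nonempty) {z : ℂ}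
    (hz : z ∉ cIm K) : ∃ δ > 0, ∀ x ∈ K, δ ≤ dist z (x : ℂ) := by
  have hcpt := isCompact_cIm hK
  have hcl : IsClosed (cIm K) := hcpt.isClosed
  have hnec : (cIm K).Nonempty := hne.image _
  refine ⟨infDist z (cIm K), (hcl.notMem_iff_infDist_pos hnec).1 hz, fun x hx => ?_⟩
  exact infDist_le_dist_of_mem ⟨x, hx, rfl⟩

/-- `f` is measurable and bounded relative to `(μ, K)`. -/
def Nice (μ : Measure ℝ) (K : Set ℝ) (f : ℂ → ℂ) : Prop :=
  AEStronglyMeasurable (fun x : ℝ => f x) μ ∧ ∃ C, ∀ x ∈ K, ‖f (x : ℝ)‖ ≤ C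

lemma nice_const (μ : Measure ℝ) (K : Set ℝ) (c : ℂ) : Nice μ K (fun _ => c) :=
  ⟨aestronglyMeasurable_const, ‖c‖, fun _ _ => le_rfl⟩

lemma nice_kernel {K : Set ℝ} (hK : IsCompact K) (hne : K.Nonempty) (μ : Measure ℝ)
    {w : ℂ} (hw : w ∉ cIm K) : Nice μ K (fun u => (w - u)⁻¹) := by
  obtain ⟨δ, hδ, hgap⟩ := exists_gap hK hne hw
  refine ⟨((measurable_const.sub Complex.measurable_ofReal).inv).aestronglyMeasurable,
    δ⁻¹, fun x hx => ?_⟩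
  rw [norm_inv]
  have h1 : δ ≤ ‖w - (x : ℂ)‖ := by rw [← dist_eq_norm]; exact hgap x hx
  exact inv_anti₀ hδ h1

lemma normDivLe {f : ℂ → ℂ} {x : ℝ} {z : ℂ} {C δ : ℝ} (hC : ‖f x‖ ≤ C) (hδ : 0 < δ)
    (hd : δ ≤ dist z (x : ℂ)) : ‖f x / (z - x)‖ ≤ C / δ := by
  rw [norm_div]
  have h1 : δ ≤ ‖z - (x : ℂ)‖ := by rwa [← dist_eq_norm]
  exact div_le_div₀ (le_trans (norm_nonneg _) hC) hC hδ h1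

lemma aesm_div {μ : Measure ℝ} {f : ℂ → ℂ} (hm : AEStronglyMeasurable (fun x : ℝ => f x) μ)
    (z : ℂ) : AEStronglyMeasurable (fun x : ℝ => f x / (z - x)) μ := by
  simp only [div_eq_mul_inv]
  exact hm.mul ((measurable_const.sub Complex.measurable_ofReal).inv).aestronglyMeasurable

lemma integrable_kernel {μ : Measure ℝ} [IsFiniteMeasure μ] {K : Set ℝ} (hK : IsCompact K)
    (hne : K.Nonempty) (hae : ∀ᵐ x ∂μ, x ∈ K) {f : ℂ → ℂ} (hf : Nice μ K f) {z : ℂ}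
    (hz : z ∉ cIm K) : Integrable (fun x : ℝ => f x / (z - x)) μ := by
  obtain ⟨hm, C, hC⟩ := hf
  obtain ⟨δ, hδ, hgap⟩ := exists_gap hK hne hz
  refine Integrable.mono' (integrable_const (C / δ))
    (aesm_div hm z) ?_
  filter_upwards [hae] with x hx
  exact normDivLe (hC x hx) hδ (hgap x hx)

lemma cont_kernel {μ : Measure ℝ} [IsFiniteMeasure μ] {K : Set ℝ} (hK : IsCompact K)
    (hne : K.Nonempty) (hae : ∀ᵐ x ∂μ, x ∈ K) {f : ℂ → ℂ} (hf : Nice μ K f) :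
    ContinuousOn (fun z => ∫ x : ℝ, f x / (z - x) ∂μ) (cIm K)ᶜ := by
  obtain ⟨hm, C, hC⟩ := hf
  intro z₀ hz₀
  obtain ⟨δ, hδ, hgap⟩ := exists_gap hK hne hz₀
  refine ContinuousAt.continuousWithinAt ?_
  refine continuousAt_of_dominated (bound := fun _ => C / (δ / 2))
    (Filter.Eventually.of_forall fun z => aesm_div hm z) ?_
    (integrable_const _) ?_
  · refine Filter.eventually_of_mem (Metric.ball_mem_nhds z₀ (half_pos hδ)) fun z hzball => ?_
    filter_upwards [hae] with x hx
    refine normDivLe (hC x hx) (half_pos hδ) ?_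
    have h1 : dist z₀ (x : ℂ) ≤ dist z₀ z + dist z (x : ℂ) := dist_triangle _ _ _
    have h2 : dist z₀ z < δ / 2 := by
      have := Metric.mem_ball.mp hzball
      rwa [dist_comm] at this
    have := hgap x hx
    linarith
  · filter_upwards [hae] with x hx
    have hne' : z₀ - (x : ℂ) ≠ 0 := by
      rw [sub_ne_zero]
      intro h
      exact hz₀ (h ▸ mem_cIm_iff.2 hx)
    exact ContinuousAt.div continuousAt_const
      ((continuous_id.sub continuous_const).continuousAt) hne'

lemma nice_of_contOn {g : ℂ → ℂ} {U : Set ℂ} (hU : IsOpen U) (hg : ContinuousOn g U)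
    {K' : Set ℝ} (hK' : IsCompact K') (hsub : cIm K' ⊆ U) {ν : Measure ℝ}
    (haeν : ∀ᵐ x ∂ν, x ∈ K') : Nice ν K' g := by
  constructor
  · have hs : MeasurableSet (Complex.ofReal ⁻¹' U) :=
      (hU.preimage Complex.continuous_ofReal).measurableSet
    have hcont : ContinuousOn (fun x : ℝ => g x) (Complex.ofReal ⁻¹' U) :=
      hg.comp Complex.continuous_ofReal.continuousOn (fun x hx => hx)
    have := hcont.aestronglyMeasurable (μ := ν) hs
    rwa [Measure.restrict_eq_self_of_ae_mem ?_] at this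
    filter_upwards [haeν] with x hx
    exact hsub (mem_cIm_iff.2 hx)
  · obtain ⟨C, hCb⟩ := (isCompact_cIm hK').exists_bound_of_continuousOn (hg.mono hsub)
    exact ⟨C, fun x hx => hCb _ (mem_cIm_iff.2 hx)⟩

end Helpers

section Fubini

open Set Metric Complex

lemma ae_prod_mem {μ ν : Measure ℝ} [SFinite ν] {s t : Set ℝ} (hs : MeasurableSet s)
    (ht : MeasurableSet t) (h1 : ∀ᵐ x ∂μ, x ∈ s) (h2 : ∀ᵐ y ∂ν, y ∈ t) :
    ∀ᵐ p ∂(μ.prod ν), p.1 ∈ s ∧ p.2 ∈ t := by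
  have hμ : μ sᶜ = 0 := by exact ae_iff.mp h1
  have hν : ν tᶜ = 0 := by exact ae_iff.mp h2
  have hun : (μ.prod ν) ((sᶜ ×ˢ (univ : Set ℝ)) ∪ ((univ : Set ℝ) ×ˢ tᶜ)) = 0 := by
    refine measure_union_null ?_ ?_ <;> rw [Measure.prod_prod]
    · rw [hμ, zero_mul]
    · rw [hν, mul_zero]
  rw [Filter.eventually_iff, mem_ae_iff]
  refine measure_mono_null (fun p hp => ?_) hun
  simp only [mem_compl_iff, mem_setOf_eq, not_and_or] at hp
  rcases hp with hp | hp
  · exact Or.inl ⟨hp, mem_univ _⟩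
  · exact Or.inr ⟨mem_univ _, hp⟩

lemma icc_gap {a1 b1 a2 b2 : ℝ} (h1 : a1 ≤ b1) (h2 : a2 ≤ b2)
    (hd : Disjoint (Icc a1 b1) (Icc a2 b2)) :
    ∃ δ > 0, ∀ x ∈ Icc a1 b1, ∀ y ∈ Icc a2 b2, δ ≤ |x - y| := by
  have hcases : b1 < a2 ∨ b2 < a1 := by
    by_contra hcon
    push_neg at hcon
    obtain ⟨hc1, hc2⟩ := hcon
    have hmem1 : max a1 a2 ∈ Icc a1 b1 := ⟨le_max_left _ _, max_le h1 hc1⟩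
    have hmem2 : max a1 a2 ∈ Icc a2 b2 := ⟨le_max_right _ _, max_le hc2 h2⟩
    exact Set.disjoint_left.mp hd hmem1 hmem2
  rcases hcases with hc | hc
  · refine ⟨a2 - b1, by linarith, fun x hx y hy => ?_⟩
    have : a2 - b1 ≤ y - x := by
      obtain ⟨hy1, _⟩ := hy; obtain ⟨_, hx2⟩ := hx; linarith
    calc a2 - b1 ≤ y - x := this
      _ ≤ |y - x| := le_abs_self _
      _ = |x - y| := abs_sub_comm _ _
  · refine ⟨a1 - b2, by linarith, fun x hx y hy => ?_⟩
    have : a1 - b2 ≤ x - y := by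
      obtain ⟨hx1, _⟩ := hx; obtain ⟨_, hy2⟩ := hy; linarith
    exact this.trans (le_abs_self _)

lemma swap_pair {μ ν : Measure ℝ} [IsFiniteMeasure μ] [IsFiniteMeasure ν] {K1 K2 : Set ℝ}
    (hs1 : MeasurableSet K1) (hs2 : MeasurableSet K2)
    (hae1 : ∀ᵐ x ∂μ, x ∈ K1) (hae2 : ∀ᵐ y ∂ν, y ∈ K2)
    {g h : ℂ → ℂ} (hg : Nice μ K1 g) (hh : Nice ν K2 h)
    {δ : ℝ} (hδ : 0 < δ) (hgap : ∀ x ∈ K1, ∀ y ∈ K2, δ ≤ |x - y|) :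
    ∫ x : ℝ, g x * (∫ y : ℝ, h y / ((x : ℂ) - y) ∂ν) ∂μ
      = ∫ y : ℝ, (∫ x : ℝ, g x / ((x : ℂ) - y) ∂μ) * h y ∂ν := by
  obtain ⟨hgm, C1, hC1⟩ := hg
  obtain ⟨hhm, C2, hC2⟩ := hh
  have hkm : Measurable (fun p : ℝ × ℝ => (((p.1 : ℂ) - (p.2 : ℂ))⁻¹)) :=
    ((Complex.measurable_ofReal.comp measurable_fst).sub
      (Complex.measurable_ofReal.comp measurable_snd)).inv
  have haesm : AEStronglyMeasurable (fun p : ℝ × ℝ => g p.1 * (h p.2 / ((p.1 : ℂ) - p.2)))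
      (μ.prod ν) := by
    simp only [div_eq_mul_inv]
    exact (hgm.comp_fst.mul (hhm.comp_snd.mul hkm.aestronglyMeasurable))
  have hbound : Integrable (Function.uncurry fun (x y : ℝ) => g x * (h y / ((x : ℂ) - y)))
      (μ.prod ν) := by
    refine Integrable.mono' (integrable_const (max C1 0 * max C2 0 / δ)) haesm ?_
    filter_upwards [ae_prod_mem hs1 hs2 hae1 hae2] with p hp
    obtain ⟨hp1, hp2⟩ := hp
    rw [Function.uncurry, norm_mul, norm_div]
    have hden : δ ≤ ‖(p.1 : ℂ) - (p.2 : ℂ)‖ := by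
      rw [← Complex.ofReal_sub, Complex.norm_real, Real.norm_eq_abs]
      exact hgap _ hp1 _ hp2
    have hnum : ‖g p.1‖ * ‖h p.2‖ ≤ max C1 0 * max C2 0 :=
      mul_le_mul (le_max_of_le_left (hC1 _ hp1)) (le_max_of_le_left (hC2 _ hp2))
        (norm_nonneg _) (le_max_right _ _)
    calc ‖g p.1‖ * (‖h p.2‖ / ‖(p.1 : ℂ) - p.2‖)
        = ‖g p.1‖ * ‖h p.2‖ / ‖(p.1 : ℂ) - p.2‖ := by ring
      _ ≤ max C1 0 * max C2 0 / δ := by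
          refine div_le_div₀ (by positivity) hnum hδ hden
  calc ∫ x : ℝ, g x * (∫ y : ℝ, h y / ((x : ℂ) - y) ∂ν) ∂μ
      = ∫ x : ℝ, ∫ y : ℝ, g x * (h y / ((x : ℂ) - y)) ∂ν ∂μ := by
        refine integral_congr_ae (Filter.Eventually.of_forall fun x => ?_)
        dsimp only
        rw [integral_const_mul]
    _ = ∫ y : ℝ, ∫ x : ℝ, g x * (h y / ((x : ℂ) - y)) ∂μ ∂ν :=
        integral_integral_swap hbound
    _ = ∫ y : ℝ, (∫ x : ℝ, g x / ((x : ℂ) - y) ∂μ) * h y ∂ν := by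
        refine integral_congr_ae (Filter.Eventually.of_forall fun y => ?_)
        dsimp only
        rw [← integral_mul_const]
        refine integral_congr_ae (Filter.Eventually.of_forall fun x => ?_)
        ring

end Fubini

section Main

open Set Metric Complex

lemma cIm_subset_compl {K1 K2 : Set ℝ} (hd : Disjoint K1 K2) : cIm K1 ⊆ (cIm K2)ᶜ := by
  rintro w ⟨x, hx, rfl⟩ hw
  exact Set.disjoint_left.mp hd hx (mem_cIm_iff.1 hw)

lemma cW_cons' (σ : ℕ → Measure ℝ) (f : ℂ → ℂ) (i : ℕ) (l : List ℕ) :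
    cW σ f (i :: l) = fun z => ∫ x : ℝ, cW σ f l x / (z - x) ∂(σ i) := rfl

lemma integrable_of_nice {μ : Measure ℝ} [IsFiniteMeasure μ] {K : Set ℝ}
    (hae : ∀ᵐ x ∂μ, x ∈ K) {f : ℂ → ℂ} (hf : Nice μ K f) :
    Integrable (fun x : ℝ => f x) μ := by
  obtain ⟨hm, C, hC⟩ := hf
  refine Integrable.mono' (integrable_const C) hm ?_
  filter_upwards [hae] with x hx using hC x hx

/-- The hypotheses of the theorem, bundled. -/
structure Setup (j : ℕ) (A B : ℕ → ℝ) (σ : ℕ → Measure ℝ) : Prop where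
  hAB : ∀ i, A i ≤ B i
  hdisj : ∀ i, 1 ≤ i → i < j → Disjoint (Icc (A i) (B i)) (Icc (A (i+1)) (B (i+1)))
  hsupp : ∀ i, 1 ≤ i → i ≤ j → (∀ᵐ x ∂σ i, x ∈ Icc (A i) (B i))

variable {j : ℕ} {A B : ℕ → ℝ} {σ : ℕ → Measure ℝ} [∀ i, IsFiniteMeasure (σ i)]

lemma chain_contOn (S : Setup j A B σ) {f : ℂ → ℂ} :
    ∀ (n a : ℕ), 1 ≤ a → a + n ≤ j →
      Nice (σ (a + n)) (Icc (A (a + n)) (B (a + n))) f →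
      ContinuousOn (cW σ f (List.range' a (n + 1))) (cIm (Icc (A a) (B a)))ᶜ := by
  intro n
  induction n with
  | zero =>
    intro a h1 h2 hf
    rw [List.range'_one, cW_cons' σ f a [], cW_nil]
    exact cont_kernel isCompact_Icc (nonempty_Icc.2 (S.hAB a))
      (S.hsupp a h1 (by omega)) (by simpa using hf)
  | succ n ih =>
    intro a h1 h2 hf
    have hrange : List.range' a (n + 2) = a :: List.range' (a + 1) (n + 1) :=
      List.range'_succ
    have hf' : Nice (σ (a + 1 + n)) (Icc (A (a + 1 + n)) (B (a + 1 + n))) f := by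
      have h : a + 1 + n = a + (n + 1) := by omega
      rw [h]; exact hf
    have htail := ih (a + 1) (by omega) (by omega) hf'
    have hdisj1 : Disjoint (Icc (A a) (B a)) (Icc (A (a+1)) (B (a+1))) :=
      S.hdisj a h1 (by omega)
    have hniceT : Nice (σ a) (Icc (A a) (B a)) (cW σ f (List.range' (a + 1) (n + 1))) :=
      nice_of_contOn ((isCompact_cIm isCompact_Icc).isClosed.isOpen_compl) htail
        isCompact_Icc (cIm_subset_compl hdisj1) (S.hsupp a h1 (by omega))
    rw [hrange, cW_cons']
    exact cont_kernel isCompact_Icc (nonempty_Icc.2 (S.hAB a))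
      (S.hsupp a h1 (by omega)) hniceT

lemma chain_nice (S : Setup j A B σ) {f : ℂ → ℂ} (n a : ℕ) (h1 : 1 ≤ a) (h2 : a + n ≤ j)
    (hf : Nice (σ (a + n)) (Icc (A (a + n)) (B (a + n))) f) {b : ℕ}
    (hb1 : 1 ≤ b) (hb : b ≤ j) (hd : Disjoint (Icc (A b) (B b)) (Icc (A a) (B a))) :
    Nice (σ b) (Icc (A b) (B b)) (cW σ f (List.range' a (n + 1))) :=
  nice_of_contOn ((isCompact_cIm isCompact_Icc).isClosed.isOpen_compl)
    (chain_contOn S n a h1 h2 hf) isCompact_Icc (cIm_subset_compl hd) (S.hsupp b hb1 hb)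

end Main

section Flip

open Set Metric Complex

lemma integral_flip_kernel (μ : Measure ℝ) (g : ℂ → ℂ) (y : ℝ) :
    (∫ x : ℝ, g x / ((x : ℂ) - y) ∂μ) = - ∫ x : ℝ, g x / ((y : ℂ) - x) ∂μ := by
  rw [← integral_neg]
  refine integral_congr_ae (Filter.Eventually.of_forall fun x => ?_)
  dsimp only
  rw [← neg_sub ((y : ℂ)) ((x : ℂ)), div_neg]

variable {j : ℕ} {A B : ℕ → ℝ} {σ : ℕ → Measure ℝ} [∀ i, IsFiniteMeasure (σ i)]

lemma flip_lemma (S : Setup j A B σ) :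
    ∀ (n a : ℕ) (g : ℂ → ℂ) (ζ : ℂ), 1 ≤ a → a + n + 1 ≤ j →
      Nice (σ a) (Icc (A a) (B a)) g →
      ζ ∉ cIm (Icc (A (a + n + 1)) (B (a + n + 1))) →
      ∫ x : ℝ, g x * cW σ (fun u => (ζ - u)⁻¹) (List.range' (a + 1) (n + 1)) x ∂(σ a)
        = (-1 : ℂ) ^ (n + 1) *
          cW σ (fun u => ∫ x : ℝ, g x / (u - x) ∂(σ a))
            (List.range' (a + 1) (n + 1)).reverse ζ := by
  intro n
  induction n with
  | zero =>
    intro a g ζ h1 h2 hg hζ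
    have hd01 := S.hdisj a h1 (by omega)
    obtain ⟨δ, hδ, hgap⟩ := icc_gap (S.hAB a) (S.hAB (a + 1)) hd01
    have hker : Nice (σ (a + 1)) (Icc (A (a + 1)) (B (a + 1))) (fun u => (ζ - u)⁻¹) :=
      nice_kernel isCompact_Icc (nonempty_Icc.2 (S.hAB (a + 1))) _ hζ
    have hone : List.range' (a + 1) (0 + 1) = [a + 1] := by simp
    rw [hone]
    simp only [cW_cons', cW_nil, List.reverse_singleton]
    have hswap := swap_pair measurableSet_Icc measurableSet_Icc
      (S.hsupp a h1 (by omega)) (S.hsupp (a + 1) (by omega) (by omega)) hg hker hδ hgap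
    rw [hswap]
    have : ∀ y : ℝ, (∫ x : ℝ, g x / ((x : ℂ) - y) ∂(σ a)) * (ζ - (y : ℂ))⁻¹
        = -((∫ x : ℝ, g x / ((y : ℂ) - x) ∂(σ a)) / (ζ - (y : ℂ))) := by
      intro y
      rw [integral_flip_kernel (σ a) g y, div_eq_mul_inv]
      ring
    rw [integral_congr_ae (Filter.Eventually.of_forall fun y => this y)]
    rw [integral_neg]
    ring
  | succ n ih =>
    intro a g ζ h1 h2 hg hζ
    have hζ' : ζ ∉ cIm (Icc (A (a + 1 + n + 1)) (B (a + 1 + n + 1))) := by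
      have h : a + 1 + n + 1 = a + (n + 1) + 1 := by omega
      rw [h]; exact hζ
    have hd01 := S.hdisj a h1 (by omega)
    obtain ⟨δ, hδ, hgap⟩ := icc_gap (S.hAB a) (S.hAB (a + 1)) hd01
    have hker : Nice (σ (a + 2 + n)) (Icc (A (a + 2 + n)) (B (a + 2 + n)))
        (fun u => (ζ - u)⁻¹) := by
      have e : a + 2 + n = a + (n + 1) + 1 := by omega
      rw [e]
      exact nice_kernel isCompact_Icc (nonempty_Icc.2 (S.hAB _)) _ hζ
    have hniceL' : Nice (σ (a + 1)) (Icc (A (a + 1)) (B (a + 1)))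
        (cW σ (fun u => (ζ - u)⁻¹) (List.range' (a + 2) (n + 1))) :=
      chain_nice S n (a + 2) (by omega) (by omega) hker (by omega) (by omega)
        (S.hdisj (a + 1) (by omega) (by omega))
    have hrange : List.range' (a + 1) (n + 1 + 1) = (a + 1) :: List.range' (a + 2) (n + 1) :=
      List.range'_succ
    rw [hrange]
    rw [cW_cons' σ _ (a + 1)]
    have hswap := swap_pair measurableSet_Icc measurableSet_Icc
      (S.hsupp a h1 (by omega)) (S.hsupp (a + 1) (by omega) (by omega)) hg hniceL' hδ hgap
    rw [hswap]
    have hstep : ∫ y : ℝ, (∫ x : ℝ, g x / ((x : ℂ) - y) ∂(σ a)) *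
        cW σ (fun u => (ζ - u)⁻¹) (List.range' (a + 2) (n + 1)) y ∂(σ (a + 1))
        = - ∫ y : ℝ, (fun u => ∫ x : ℝ, g x / (u - x) ∂(σ a)) (y : ℂ) *
            cW σ (fun u => (ζ - u)⁻¹) (List.range' (a + 2) (n + 1)) y ∂(σ (a + 1)) := by
      rw [← integral_neg]
      refine integral_congr_ae (Filter.Eventually.of_forall fun y => ?_)
      dsimp only
      rw [integral_flip_kernel (σ a) g y, neg_mul]
    rw [hstep]
    have hTg : Nice (σ (a + 1)) (Icc (A (a + 1)) (B (a + 1)))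
        (fun u => ∫ x : ℝ, g x / (u - x) ∂(σ a)) :=
      nice_of_contOn ((isCompact_cIm isCompact_Icc).isClosed.isOpen_compl)
        (cont_kernel isCompact_Icc (nonempty_Icc.2 (S.hAB a)) (S.hsupp a h1 (by omega)) hg)
        isCompact_Icc (cIm_subset_compl hd01.symm) (S.hsupp (a + 1) (by omega) (by omega))
    rw [ih (a + 1) (fun u => ∫ x : ℝ, g x / (u - x) ∂(σ a)) ζ (by omega) (by omega) hTg hζ']
    rw [List.reverse_cons, cW_append_singleton]
    ring

end Flip

section MainId

open Set Metric Complex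

variable {j : ℕ} {A B : ℕ → ℝ} {σ : ℕ → Measure ℝ} [∀ i, IsFiniteMeasure (σ i)]

lemma main_identity (S : Setup j A B σ) :
    ∀ (n a : ℕ) (z w : ℂ), 1 ≤ a → a + n ≤ j →
      z ∉ cIm (Icc (A a) (B a)) → w ∉ cIm (Icc (A (a + n)) (B (a + n))) →
      (w - z) * cW σ (fun u => (w - u)⁻¹) (List.range' a (n + 1)) z
        = ∑ i ∈ Finset.range (n + 2), (-1 : ℂ) ^ (n + 1 - i) *
            cW σ (fun _ => 1) (List.range' a i) z *
            cW σ (fun _ => 1) (List.range' (a + i) (n + 1 - i)).reverse w := by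
  intro n
  induction n with
  | zero =>
    intro a z w h1 h2 hz hw
    have haea : ∀ᵐ x ∂σ a, x ∈ Icc (A a) (B a) := S.hsupp a h1 (by omega)
    have hint1 : Integrable (fun x : ℝ => (fun _ : ℂ => (1:ℂ)) x / (z - x)) (σ a) :=
      integrable_kernel isCompact_Icc (nonempty_Icc.2 (S.hAB a)) haea
        (nice_const _ _ _) hz
    have hint2 : Integrable (fun x : ℝ => (fun _ : ℂ => (1:ℂ)) x / (w - x)) (σ a) :=
      integrable_kernel isCompact_Icc (nonempty_Icc.2 (S.hAB a)) haea
        (nice_const _ _ _) hw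
    simp only [Finset.sum_range_succ, Finset.sum_range_zero, List.range'_zero,
      List.range'_one, List.reverse_nil, List.reverse_singleton, cW_nil, Nat.add_zero,
      Nat.sub_zero, Nat.sub_self, pow_zero, pow_one, zero_add, one_mul, mul_one,
      cW_cons'] at *
    have hkey : (w - z) * ∫ x : ℝ, (w - (x:ℂ))⁻¹ / (z - x) ∂(σ a)
        = ∫ x : ℝ, ((1:ℂ) / (z - x) - 1 / (w - x)) ∂(σ a) := by
      rw [← integral_const_mul]
      refine integral_congr_ae ?_
      filter_upwards [haea] with x hx
      have hzx : z - (x:ℂ) ≠ 0 := sub_ne_zero.mpr (fun h => hz (h ▸ mem_cIm_iff.2 hx))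
      have hwx : w - (x:ℂ) ≠ 0 := sub_ne_zero.mpr (fun h => hw (h ▸ mem_cIm_iff.2 hx))
      rw [one_div, one_div, inv_sub_inv hzx hwx, div_eq_mul_inv, div_eq_mul_inv, mul_inv]
      ring
    simp only [one_div] at hkey hint1 hint2
    rw [hkey, integral_sub hint1 hint2]
    simp only [one_div]
    ring
  | succ n ih =>
    intro a z w h1 h2 hz hw
    have hw' : w ∉ cIm (Icc (A (a + 1 + n)) (B (a + 1 + n))) := by
      have e : a + 1 + n = a + (n + 1) := by omega
      rw [e]; exact hw
    have hdisj1 : Disjoint (Icc (A a) (B a)) (Icc (A (a + 1)) (B (a + 1))) :=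
      S.hdisj a h1 (by omega)
    have haea : ∀ᵐ x ∂σ a, x ∈ Icc (A a) (B a) := S.hsupp a h1 (by omega)
    have hnw : Nice (σ (a + 1 + n)) (Icc (A (a + 1 + n)) (B (a + 1 + n)))
        (fun u => (w - u)⁻¹) :=
      nice_kernel isCompact_Icc (nonempty_Icc.2 (S.hAB _)) _ hw'
    have hniceT : Nice (σ a) (Icc (A a) (B a))
        (cW σ (fun u => (w - u)⁻¹) (List.range' (a + 1) (n + 1))) :=
      chain_nice S n (a + 1) (by omega) (by omega) hnw h1 (by omega) hdisj1
    have hTint := integrable_of_nice haea hniceT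
    have hTker := integrable_kernel isCompact_Icc (nonempty_Icc.2 (S.hAB a)) haea hniceT hz
    have hVnice : ∀ k, k < n + 2 → Nice (σ a) (Icc (A a) (B a))
        (cW σ (fun _ => (1:ℂ)) (List.range' (a + 1) k)) := by
      intro k hk
      cases k with
      | zero =>
        rw [List.range'_zero]
        exact nice_const _ _ _
      | succ m =>
        exact chain_nice S m (a + 1) (by omega) (by omega) (nice_const _ _ _)
          h1 (by omega) hdisj1
    symm
    rw [show n + 1 + 2 = (n + 2) + 1 from rfl, Finset.sum_range_succ']
    have hFk : ∀ k ∈ Finset.range (n + 2),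
        (-1 : ℂ) ^ (n + 1 + 1 - (k + 1)) * cW σ (fun _ => 1) (List.range' a (k + 1)) z *
          cW σ (fun _ => 1) (List.range' (a + (k + 1)) (n + 1 + 1 - (k + 1))).reverse w
        = ∫ x : ℝ, (-1 : ℂ) ^ (n + 1 - k) *
            (cW σ (fun _ => (1:ℂ)) (List.range' (a + 1) k) x / (z - x)) *
            cW σ (fun _ => (1:ℂ)) (List.range' (a + 1 + k) (n + 1 - k)).reverse w ∂(σ a) := by
      intro k hk
      have e1 : n + 1 + 1 - (k + 1) = n + 1 - k := by omega
      have e2 : a + (k + 1) = a + 1 + k := by omega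
      rw [e1, e2, List.range'_succ, cW_cons']
      rw [← integral_const_mul, ← integral_mul_const]
    rw [Finset.sum_congr rfl hFk]
    have hInt : ∀ k ∈ Finset.range (n + 2), Integrable (fun x : ℝ =>
        (-1 : ℂ) ^ (n + 1 - k) *
          (cW σ (fun _ => (1:ℂ)) (List.range' (a + 1) k) x / (z - x)) *
          cW σ (fun _ => (1:ℂ)) (List.range' (a + 1 + k) (n + 1 - k)).reverse w) (σ a) := by
      intro k hk
      have hker := integrable_kernel isCompact_Icc (nonempty_Icc.2 (S.hAB a)) haea
        (hVnice k (Finset.mem_range.mp hk)) hz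
      exact (hker.const_mul _).mul_const _
    rw [← integral_finset_sum _ hInt]
    have hC : ∫ x : ℝ, (∑ k ∈ Finset.range (n + 2), (-1 : ℂ) ^ (n + 1 - k) *
          (cW σ (fun _ => (1:ℂ)) (List.range' (a + 1) k) x / (z - x)) *
          cW σ (fun _ => (1:ℂ)) (List.range' (a + 1 + k) (n + 1 - k)).reverse w) ∂(σ a)
        = ∫ x : ℝ, ((w - z) * (cW σ (fun u => (w - u)⁻¹) (List.range' (a + 1) (n + 1)) x
            / (z - x)) + cW σ (fun u => (w - u)⁻¹) (List.range' (a + 1) (n + 1)) x) ∂(σ a) := by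
      refine integral_congr_ae ?_
      filter_upwards [haea] with x hx
      have hx1 : (x : ℂ) ∉ cIm (Icc (A (a + 1)) (B (a + 1))) :=
        fun hmem => Set.disjoint_left.mp hdisj1 hx (mem_cIm_iff.1 hmem)
      have hIH := ih (a + 1) x w (by omega) (by omega) hx1 hw'
      have hzx : z - (x:ℂ) ≠ 0 := sub_ne_zero.mpr (fun h => hz (h ▸ mem_cIm_iff.2 hx))
      have hsum2 : (∑ k ∈ Finset.range (n + 2), (-1 : ℂ) ^ (n + 1 - k) *
            (cW σ (fun _ => (1:ℂ)) (List.range' (a + 1) k) x / (z - x)) *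
            cW σ (fun _ => (1:ℂ)) (List.range' (a + 1 + k) (n + 1 - k)).reverse w)
          = (∑ k ∈ Finset.range (n + 2), (-1 : ℂ) ^ (n + 1 - k) *
            cW σ (fun _ => (1:ℂ)) (List.range' (a + 1) k) x *
            cW σ (fun _ => (1:ℂ)) (List.range' (a + 1 + k) (n + 1 - k)).reverse w)
            * (z - (x:ℂ))⁻¹ := by
        rw [Finset.sum_mul]
        refine Finset.sum_congr rfl fun k hk => ?_
        ring
      rw [hsum2, ← hIH]
      field_simp
      ring
    rw [hC, integral_add (hTker.const_mul _) hTint, integral_const_mul]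
    have hflip := flip_lemma S n a (fun _ => (1:ℂ)) w h1 (by omega) (nice_const _ _ _) hw
    simp only [one_mul] at hflip
    rw [hflip]
    simp only [Nat.sub_zero, Nat.add_zero, List.range'_zero, cW_nil, mul_one, one_mul]
    rw [List.range'_succ (s := a) (n := n + 1) (step := 1)]
    rw [List.reverse_cons, cW_append_singleton, cW_cons']
    beta_reduce
    ring

end MainId

/-- miracle identity: for `j ≥ 2` and `z ∉ Δ₁ ∪ Δⱼ`,
`ŝ_{1,j}(z) + Σ_{i=1}^{j-1} (-1)^i ŝ_{1,j-i}(z) ŝ_{j,j-i+1}(z) + (-1)^j ŝ_{j,1}(z) = 0`. -/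
theorem stmt12 (j : ℕ) (hj : 2 ≤ j) (A B : ℕ → ℝ) (hAB : ∀ i, A i ≤ B i)
    (hdisj : ∀ i, 1 ≤ i → i < j → Disjoint (Set.Icc (A i) (B i)) (Set.Icc (A (i+1)) (B (i+1))))
    (σ : ℕ → Measure ℝ) [∀ i, IsFiniteMeasure (σ i)]
    (hsupp : ∀ i, 1 ≤ i → i ≤ j → msupport (σ i) ⊆ Set.Icc (A i) (B i))
    (hinf : ∀ i, 1 ≤ i → i ≤ j → (msupport (σ i)).Infinite) :
    ∀ z : ℂ, z ∉ (Set.Icc (A 1) (B 1)).image ((↑) : ℝ → ℂ) →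
      z ∉ (Set.Icc (A j) (B j)).image ((↑) : ℝ → ℂ) →
      shatU σ 1 j z
        + ∑ i ∈ Finset.Icc 1 (j - 1), (-1 : ℂ) ^ i * shatU σ 1 (j - i) z * shatD σ j (j - i + 1) z
        + (-1 : ℂ) ^ j * shatD σ j 1 z = 0 := by
  intro z hz1 hzj
  have hsupp' : ∀ i, 1 ≤ i → i ≤ j → (∀ᵐ x ∂σ i, x ∈ Set.Icc (A i) (B i)) := by
    intro i hi1 hij
    have hnull : σ i (msupport (σ i))ᶜ = 0 := by
      refine measure_null_of_locally_null _ (fun x hx => ?_)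
      simp only [msupport, Set.mem_compl_iff, Set.mem_setOf_eq] at hx
      push_neg at hx
      obtain ⟨U, hU, hU0⟩ := hx
      exact ⟨U, mem_nhdsWithin_of_mem_nhds hU, hU0⟩
    rw [ae_iff]
    refine measure_mono_null (fun x hxn => ?_) hnull
    exact fun hmem => hxn (hsupp i hi1 hij hmem)
  have S : Setup j A B σ := ⟨hAB, hdisj, hsupp'⟩
  obtain ⟨m, rfl⟩ : ∃ m, j = m + 1 := ⟨j - 1, by omega⟩
  have hU : ∀ k, shatU σ 1 k = cW σ (fun _ => 1) (List.range' 1 k) := by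
    intro k
    simp only [shatU, chainT_eq_cW, Nat.add_sub_cancel]
  have hD : ∀ k, shatD σ (m+1) k = cW σ (fun _ => 1) (List.range' k (m+1+1-k)).reverse := by
    intro k
    simp only [shatD, chainT_eq_cW]
  have hz1' : z ∉ cIm (Set.Icc (A 1) (B 1)) := hz1
  have hzj' : z ∉ cIm (Set.Icc (A (1 + m)) (B (1 + m))) := by
    have e : 1 + m = m + 1 := by omega
    rw [e]; exact hzj
  have hmain := main_identity S m 1 z z (le_refl 1) (by omega) hz1' hzj'
  rw [sub_self, zero_mul] at hmain
  rw [Finset.sum_range_succ, Finset.sum_range_succ'] at hmain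
  have hE1 : shatU σ 1 (m + 1) z
      = (-1 : ℂ) ^ (m + 1 - (m + 1)) * cW σ (fun _ => 1) (List.range' 1 (m + 1)) z *
        cW σ (fun _ => 1) (List.range' (1 + (m + 1)) (m + 1 - (m + 1))).reverse z := by
    rw [hU]
    simp only [Nat.sub_self, pow_zero, List.range'_zero, List.reverse_nil, cW_nil,
      one_mul, mul_one]
  have hE0 : (-1 : ℂ) ^ (m + 1) * shatD σ (m + 1) 1 z
      = (-1 : ℂ) ^ (m + 1 - 0) * cW σ (fun _ => 1) (List.range' 1 0) z *
        cW σ (fun _ => 1) (List.range' (1 + 0) (m + 1 - 0)).reverse z := by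
    rw [hD]
    simp only [Nat.sub_zero, Nat.add_zero, List.range'_zero, cW_nil, Nat.add_sub_cancel,
      one_mul, mul_one]
  have hMid : ∑ i ∈ Finset.Icc 1 (m + 1 - 1),
      (-1 : ℂ) ^ i * shatU σ 1 (m + 1 - i) z * shatD σ (m+1) (m + 1 - i + 1) z
      = ∑ k ∈ Finset.range m, ((-1 : ℂ) ^ (m + 1 - (k + 1)) *
          cW σ (fun _ => 1) (List.range' 1 (k + 1)) z *
          cW σ (fun _ => 1) (List.range' (1 + (k + 1)) (m + 1 - (k + 1))).reverse z) := by
    refine Finset.sum_nbij' (fun i => m - i) (fun k => m - k) ?_ ?_ ?_ ?_ ?_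
    · intro a ha
      simp only [Finset.mem_Icc, Nat.add_sub_cancel] at ha
      show m - a ∈ Finset.range m
      simp only [Finset.mem_range]
      omega
    · intro a ha
      simp only [Finset.mem_range] at ha
      show m - a ∈ Finset.Icc 1 (m + 1 - 1)
      simp only [Finset.mem_Icc, Nat.add_sub_cancel]
      omega
    · intro a ha
      simp only [Finset.mem_Icc, Nat.add_sub_cancel] at ha
      show m - (m - a) = a
      omega
    · intro a ha
      simp only [Finset.mem_range] at ha
      show m - (m - a) = a
      omega
    · intro a ha
      simp only [Finset.mem_Icc, Nat.add_sub_cancel] at ha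
      show _ = (-1 : ℂ) ^ (m + 1 - (m - a + 1)) *
        cW σ (fun _ => 1) (List.range' 1 (m - a + 1)) z *
        cW σ (fun _ => 1) (List.range' (1 + (m - a + 1)) (m + 1 - (m - a + 1))).reverse z
      rw [hU, hD]
      have E1 : m + 1 - (m - a + 1) = a := by omega
      have E4 : m + 1 + 1 - (m + 1 - a + 1) = a := by omega
      have E3 : 1 + (m - a + 1) = m + 1 - a + 1 := by omega
      have E2 : m - a + 1 = m + 1 - a := by omega
      rw [E1, E4, E3, E2]
  rw [hE1, hE0, hMid]
  linear_combination -hmain
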